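/- Work in the Euclidean plane ℝ² with coordinates (x₁, x₂). Fix ρ > 0. For s ∈ ℝ with |s| > ρ, let D_s be the closed disk with center (s, (s²+ρ²)/(2ρ)) and radius (s²+ρ²)/(2ρ), let B_ρ(0) be the open ball of radius ρ centered at the origin, and let W_s = {(x₁,x₂) : x₂ ≥ 0} \ (D_s ∪ B_ρ(0)). Then for every point q = (q₁, q₂) with 0 ≤ q₂ < ρ, either ‖q‖ < ρ (i.e. q ∈ B_ρ(0)), or there exists s with |s| > ρ such that q ∈ W_s and the connected component of q inside W_s is a bounded set. In other words, the open ball B_ρ(0) together with the bounded connected components A_s of the sets W_s cover the strip {(x₁,x₂) : 0 ≤ x₂ < ρ}. -/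

import Mathlib

open Set Metric

set_option maxHeartbeats 1000000

/-- The point of the Euclidean plane `ℝ²` with coordinates `(a, b)`. -/
noncomputable def pt (a b : ℝ) : EuclideanSpace ℝ (Fin 2) :=
  (EuclideanSpace.equiv (Fin 2) ℝ).symm ![a, b]

lemma norm_sq_eq2 (x : EuclideanSpace ℝ (Fin 2)) : ‖x‖ ^ 2 = (x 0) ^ 2 + (x 1) ^ 2 := by
  rw [EuclideanSpace.norm_eq, Real.sq_sqrt (by positivity)]
  simp [Fin.sum_univ_two, Real.dist_eq, sq_abs]

lemma dist_sq_eq2 (x y : EuclideanSpace ℝ (Fin 2)) :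
    dist x y ^ 2 = (x 0 - y 0) ^ 2 + (x 1 - y 1) ^ 2 := by
  rw [EuclideanSpace.dist_eq, Real.sq_sqrt (by positivity)]
  simp [Fin.sum_univ_two, Real.dist_eq, sq_abs]

/-- The region `W_s`: the closed upper half-plane with the tangent disk `D_s`
(center `(s, (s²+ρ²)/(2ρ))`, radius `(s²+ρ²)/(2ρ)`) and the open ball `B_ρ(0)` removed. -/
noncomputable def Wset (ρ s : ℝ) : Set (EuclideanSpace ℝ (Fin 2)) :=
  {p : EuclideanSpace ℝ (Fin 2) | 0 ≤ p 1} \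
    (Metric.closedBall (pt s ((s ^ 2 + ρ ^ 2) / (2 * ρ))) ((s ^ 2 + ρ ^ 2) / (2 * ρ)) ∪
      Metric.ball (0 : EuclideanSpace ℝ (Fin 2)) ρ)

lemma mem_Wset_iff (ρ s r : ℝ) (hρ : 0 < ρ) (hr2 : 2 * r * ρ = s ^ 2 + ρ ^ 2)
    (x : EuclideanSpace ℝ (Fin 2)) :
    x ∈ Wset ρ s ↔ 0 ≤ x 1 ∧
      r ^ 2 < (x 0 - s) ^ 2 + (x 1 - r) ^ 2 ∧
      ρ ^ 2 ≤ (x 0) ^ 2 + (x 1) ^ 2 := by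
  have hrr : (s ^ 2 + ρ ^ 2) / (2 * ρ) = r := by
    rw [← hr2]; field_simp
  have hr0 : 0 < r := by nlinarith [sq_nonneg s]
  have hd2 : dist x (pt s r) ^ 2 = (x 0 - s) ^ 2 + (x 1 - r) ^ 2 := dist_sq_eq2 x (pt s r)
  have hn2 : dist x (0 : EuclideanSpace ℝ (Fin 2)) ^ 2 = (x 0) ^ 2 + (x 1) ^ 2 := by
    rw [dist_zero_right, norm_sq_eq2]
  simp only [Wset, mem_diff, mem_setOf_eq, mem_union, not_or, mem_closedBall, mem_ball, hrr]
  constructor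
  · rintro ⟨h1, h2, h3⟩
    refine ⟨h1, ?_, ?_⟩
    · have hd : r < dist x (pt s r) := lt_of_not_ge h2
      nlinarith [dist_nonneg (x := x) (y := pt s r)]
    · have hd : ρ ≤ dist x 0 := not_lt.mp h3
      nlinarith [dist_nonneg (x := x) (y := (0 : EuclideanSpace ℝ (Fin 2)))]
  · rintro ⟨h1, h2, h3⟩
    refine ⟨h1, ?_, ?_⟩
    · intro h
      nlinarith [dist_nonneg (x := x) (y := pt s r)]
    · intro h
      nlinarith [dist_nonneg (x := x) (y := (0 : EuclideanSpace ℝ (Fin 2)))]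

/-- Generic clopen-trap lemma: if `R` is open, contains `q`, and no point of `W` lies on the
frontier of `R`, then the connected component of `q` in `W` stays in `R`. -/
lemma connectedComponentIn_subset_of_clopen {α : Type*} [TopologicalSpace α]
    {W R : Set α} {q : α} (hR : IsOpen R)
    (hkey : ∀ x ∈ W, x ∈ closure R → x ∈ R) (hq : q ∈ W) (hqR : q ∈ R) :
    connectedComponentIn W q ⊆ R := by
  have hCW := connectedComponentIn_subset W q
  have hCpre : IsPreconnected (connectedComponentIn W q) := isPreconnected_connectedComponentIn
  have hqC : q ∈ connectedComponentIn W q := mem_connectedComponentIn hq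
  have hsub : connectedComponentIn W q ⊆ R ∪ (closure R)ᶜ := by
    intro x hx
    by_cases h : x ∈ closure R
    · exact Or.inl (hkey x (hCW hx) h)
    · exact Or.inr h
  rcases hCpre.subset_or_subset hR isClosed_closure.isOpen_compl
      (disjoint_compl_right.mono_left subset_closure) hsub with h | h
  · exact h
  · exact absurd (h hqC) (not_not_intro (subset_closure hqR))

lemma bounded_pocket (ρ s : ℝ) (hρ : 0 < ρ) (q : EuclideanSpace ℝ (Fin 2))
    (hqW : q ∈ Wset ρ s) (hq0 : min 0 s < q 0) (hq1 : q 0 < max 0 s) (hq2 : q 1 < ρ) :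
    Bornology.IsBounded (connectedComponentIn (Wset ρ s) q) := by
  obtain ⟨r, hr2, hr0⟩ : ∃ r : ℝ, 2 * r * ρ = s ^ 2 + ρ ^ 2 ∧ 0 < r := by
    refine ⟨(s ^ 2 + ρ ^ 2) / (2 * ρ), by field_simp, by positivity⟩
  have h2r : ρ ≤ 2 * r := by nlinarith [sq_nonneg s]
  have hc0 : Continuous fun x : EuclideanSpace ℝ (Fin 2) => x 0 :=
    (EuclideanSpace.proj (0 : Fin 2)).continuous
  have hc1 : Continuous fun x : EuclideanSpace ℝ (Fin 2) => x 1 :=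
    (EuclideanSpace.proj (1 : Fin 2)).continuous
  have hRopen : IsOpen ({x | min 0 s < x 0} ∩ ({x | x 0 < max 0 s} ∩ {x | x 1 < ρ}) :
      Set (EuclideanSpace ℝ (Fin 2))) :=
    (isOpen_lt continuous_const hc0).inter
      ((isOpen_lt hc0 continuous_const).inter (isOpen_lt hc1 continuous_const))
  have hclosure : closure ({x | min 0 s < x 0} ∩ ({x | x 0 < max 0 s} ∩ {x | x 1 < ρ}) :
        Set (EuclideanSpace ℝ (Fin 2))) ⊆
      {x | min 0 s ≤ x 0} ∩ ({x | x 0 ≤ max 0 s} ∩ {x | x 1 ≤ ρ}) := by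
    apply closure_minimal
    · rintro x ⟨h1, h2, h3⟩
      simp only [mem_setOf_eq, mem_inter_iff] at *
      exact ⟨h1.le, h2.le, h3.le⟩
    · exact (isClosed_le continuous_const hc0).inter
        ((isClosed_le hc0 continuous_const).inter (isClosed_le hc1 continuous_const))
  have hkey : ∀ x ∈ Wset ρ s,
      x ∈ closure ({x | min 0 s < x 0} ∩ ({x | x 0 < max 0 s} ∩ {x | x 1 < ρ}) :
        Set (EuclideanSpace ℝ (Fin 2))) →
      x ∈ ({x | min 0 s < x 0} ∩ ({x | x 0 < max 0 s} ∩ {x | x 1 < ρ}) :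
        Set (EuclideanSpace ℝ (Fin 2))) := by
    intro x hxW hxcl
    obtain ⟨h1, h2, h3⟩ := (mem_Wset_iff ρ s r hρ hr2 x).mp hxW
    obtain ⟨k1, k2, k3⟩ := hclosure hxcl
    simp only [mem_setOf_eq] at k1 k2 k3
    have hbet : x 0 * (x 0 - 2 * s) ≤ 0 := by
      rcases le_total 0 s with hs0 | hs0
      · rw [min_eq_left hs0] at k1; rw [max_eq_right hs0] at k2
        nlinarith [mul_nonneg k1 (by linarith : (0:ℝ) ≤ s - x 0), mul_nonneg k1 hs0]
      · rw [min_eq_right hs0] at k1; rw [max_eq_left hs0] at k2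
        nlinarith [mul_nonneg (by linarith : (0:ℝ) ≤ x 0 - s) (by linarith : (0:ℝ) ≤ - x 0),
          mul_nonneg (by linarith : (0:ℝ) ≤ -s) (by linarith : (0:ℝ) ≤ - x 0)]
    have hx1ρ : x 1 < ρ := by
      rcases lt_or_ge (x 1) ρ with h | h
      · exact h
      · exfalso
        have hx1 : x 1 = ρ := le_antisymm k3 h
        rw [hx1] at h2
        nlinarith [h2, hbet, hr2]
    refine ⟨?_, ?_, hx1ρ⟩ <;> simp only [mem_setOf_eq]
    · rcases le_total 0 s with hs0 | hs0
      · rw [min_eq_left hs0]; rw [min_eq_left hs0] at k1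
        rcases lt_or_ge 0 (x 0) with h | h
        · exact h
        · exfalso
          have hx0 : x 0 = 0 := le_antisymm h k1
          rw [hx0] at h3; nlinarith
      · rw [min_eq_right hs0]; rw [min_eq_right hs0] at k1
        rcases lt_or_ge s (x 0) with h | h
        · exact h
        · exfalso
          have hx0 : x 0 = s := le_antisymm h k1
          rw [hx0] at h2
          nlinarith [h2, h1, hx1ρ.le, h2r]
    · rcases le_total 0 s with hs0 | hs0
      · rw [max_eq_right hs0]; rw [max_eq_right hs0] at k2
        rcases lt_or_ge (x 0) s with h | h
        · exact h
        · exfalso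
          have hx0 : x 0 = s := le_antisymm k2 h
          rw [hx0] at h2
          nlinarith [h2, h1, hx1ρ.le, h2r]
      · rw [max_eq_left hs0]; rw [max_eq_left hs0] at k2
        rcases lt_or_ge (x 0) 0 with h | h
        · exact h
        · exfalso
          have hx0 : x 0 = 0 := le_antisymm k2 h
          rw [hx0] at h3; nlinarith
  have hCR := connectedComponentIn_subset_of_clopen hRopen hkey hqW ⟨hq0, hq1, hq2⟩
  have hCW := connectedComponentIn_subset (Wset ρ s) q
  apply (isBounded_closedBall (x := (0 : EuclideanSpace ℝ (Fin 2))) (r := |s| + ρ)).subset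
  intro x hx
  obtain ⟨k1, k2, k3⟩ := hCR hx
  simp only [mem_setOf_eq] at k1 k2 k3
  obtain ⟨h1, -, -⟩ := (mem_Wset_iff ρ s r hρ hr2 x).mp (hCW hx)
  have hm1 : -|s| ≤ min 0 s := le_min (by simp [abs_nonneg]) (neg_abs_le s)
  have hm2 : max 0 s ≤ |s| := max_le (abs_nonneg s) (le_abs_self s)
  have hx0 : x 0 ^ 2 ≤ s ^ 2 := by nlinarith [sq_abs s]
  have hx1 : x 1 ^ 2 ≤ ρ ^ 2 := by nlinarith
  rw [mem_closedBall, dist_zero_right]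
  nlinarith [norm_sq_eq2 x, norm_nonneg x, abs_nonneg s, sq_abs s]

/-- Every point `q` of the strip `{0 ≤ x₂ < ρ}` lies either in the open ball `B_ρ(0)` or in a
bounded connected component of some `W_s` with `|s| > ρ`: the ball together with the bounded
components `A_s` cover the strip. -/
theorem strip_covered_by_ball_and_bounded_components (ρ : ℝ) (hρ : 0 < ρ)
    (q : EuclideanSpace ℝ (Fin 2)) (hq0 : 0 ≤ q 1) (hq1 : q 1 < ρ) :
    ‖q‖ < ρ ∨ ∃ s : ℝ, ρ < |s| ∧ q ∈ Wset ρ s ∧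
      Bornology.IsBounded (connectedComponentIn (Wset ρ s) q) := by
  rcases lt_or_ge ‖q‖ ρ with h | hn
  · exact Or.inl h
  right
  have hq2 : ρ ^ 2 ≤ (q 0) ^ 2 + (q 1) ^ 2 := by
    nlinarith [norm_sq_eq2 q, norm_nonneg q]
  have hρb : 0 < ρ - q 1 := by linarith
  have ha2 : 0 < (q 0) ^ 2 := by nlinarith
  have ha0 : q 0 ≠ 0 := by
    intro h; rw [h] at ha2; simp at ha2
  have habs : 0 < |q 0| := abs_pos.mpr ha0
  obtain ⟨t, ht0, ht3, ht1, htρ⟩ :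
      ∃ t : ℝ, 0 < t ∧ 1 < t ∧ 2 * ρ ≤ (ρ - q 1) * t ∧ ρ < t * |q 0| := by
    refine ⟨2 * ρ / (ρ - q 1) + ρ / |q 0| + 2, ?_, ?_, ?_, ?_⟩
    · positivity
    · have h1 : 0 ≤ 2 * ρ / (ρ - q 1) := by positivity
      have h2 : 0 ≤ ρ / |q 0| := by positivity
      linarith
    · have h1 : (ρ - q 1) * (2 * ρ / (ρ - q 1)) = 2 * ρ := by field_simp
      have h2 : 0 ≤ (ρ - q 1) * (ρ / |q 0|) := by positivity
      nlinarith
    · have h1 : (ρ / |q 0|) * |q 0| = ρ := by field_simp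
      have h2 : 0 ≤ (2 * ρ / (ρ - q 1)) * |q 0| := by positivity
      nlinarith
  have hqW : q ∈ Wset ρ (t * q 0) := by
    obtain ⟨r, hr2, hr0⟩ : ∃ r : ℝ, 2 * r * ρ = (t * q 0) ^ 2 + ρ ^ 2 ∧ 0 < r :=
      ⟨((t * q 0) ^ 2 + ρ ^ 2) / (2 * ρ), by field_simp, by positivity⟩
    rw [mem_Wset_iff ρ (t * q 0) r hρ hr2 q]
    refine ⟨hq0, ?_, hq2⟩
    have hkeyq : 0 < ρ * ((q 0) ^ 2 + (q 1) ^ 2) - 2 * ρ * (t * q 0) * q 0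
        + (t * q 0) ^ 2 * (ρ - q 1) - ρ ^ 2 * q 1 := by
      have e1 : 0 ≤ t * (q 0) ^ 2 * ((ρ - q 1) * t - 2 * ρ) := by
        apply mul_nonneg (mul_nonneg ht0.le (sq_nonneg (q 0))); linarith
      nlinarith [mul_pos (mul_pos hρ hρ) hρb, mul_le_mul_of_nonneg_left hq2 hρ.le]
    nlinarith [hkeyq, hr2, hρ]
  refine ⟨t * q 0, ?_, hqW, ?_⟩
  · have h1 : |t * q 0| = t * |q 0| := by rw [abs_mul, abs_of_pos ht0]
    rw [h1]; exact htρ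
  · apply bounded_pocket ρ (t * q 0) hρ q hqW
    · rcases ha0.lt_or_gt with hneg | hpos
      · have hsa : t * q 0 < q 0 := by nlinarith
        exact lt_of_le_of_lt (min_le_right 0 (t * q 0)) hsa
      · exact lt_of_le_of_lt (min_le_left 0 (t * q 0)) hpos
    · rcases ha0.lt_or_gt with hneg | hpos
      · exact lt_of_lt_of_le hneg (le_max_left 0 (t * q 0))
      · have has : q 0 < t * q 0 := by nlinarith
        exact lt_of_lt_of_le has (le_max_right 0 (t * q 0))
    · exact hq1
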